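/- For all integers r ≥ 1 and s ≥ 3, every element of EqC_r^s can be written as z + Σ_{j=1}^{s-1} a_j·x_j where z ∈ EqLR_r^s and a_1,…,a_{s-1} ∈ ℝ. -/

import Mathlib

open Matrix Polynomial BigOperators
open scoped ComplexOrder

noncomputable section

/-- A Hermitian `r × r` complex matrix `A` has eigenvalues `μ` (listed with
multiplicity): `A` is Hermitian and its characteristic polynomial is
`∏ i, (X - μ i)`. -/
def HasEigenvalues {r : ℕ} (A : Matrix (Fin r) (Fin r) ℂ) (μ : Fin r → ℝ) : Prop :=
  A.IsHermitian ∧ A.charpoly = ∏ i, (X - Polynomial.C (μ i : ℂ))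

/-- A tuple `(λ¹, …, λ^{s-1}, ν)` of real `r`-sequences. -/
abbrev Tup (r s : ℕ) := (Fin (s - 1) → Fin r → ℝ) × (Fin r → ℝ)

/-- The Hermitian eigencone `C_r^s`: tuples of nonincreasing sequences that are the
eigenvalues of Hermitian matrices `A₁, …, A_{s-1}, C` with `A₁ + ⋯ + A_{s-1} = C`. -/
def memC (r s : ℕ) (x : Tup r s) : Prop :=
  (∀ j, Antitone (x.1 j)) ∧ Antitone x.2 ∧
  ∃ (A : Fin (s - 1) → Matrix (Fin r) (Fin r) ℂ) (B : Matrix (Fin r) (Fin r) ℂ),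
    (∀ j, HasEigenvalues (A j) (x.1 j)) ∧ HasEigenvalues B x.2 ∧ (∑ j, A j) = B

/-- The majorized eigencone `EqC_r^s`: as above but `A₁ + ⋯ + A_{s-1} - C` is
positive semidefinite. -/
def memEqC (r s : ℕ) (x : Tup r s) : Prop :=
  (∀ j, Antitone (x.1 j)) ∧ Antitone x.2 ∧
  ∃ (A : Fin (s - 1) → Matrix (Fin r) (Fin r) ℂ) (B : Matrix (Fin r) (Fin r) ℂ),
    (∀ j, HasEigenvalues (A j) (x.1 j)) ∧ HasEigenvalues B x.2 ∧ ((∑ j, A j) - B).PosSemidef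

/-- The last (`r`-th) entry of an `r`-sequence. -/
def lastEntry {r : ℕ} (μ : Fin r → ℝ) : ℝ :=
  if h : 0 < r then μ ⟨r - 1, by omega⟩ else 0

/-- `LR_r^s = {x ∈ C_r^s : λ^j_r ≥ 0 for all j}`. -/
def memLR (r s : ℕ) (x : Tup r s) : Prop :=
  memC r s x ∧ ∀ j, 0 ≤ lastEntry (x.1 j)

/-- `C_{SL_r}^s = {x ∈ C_r^s : λ^j_r = 0 for all j}`. -/
def memCSL (r s : ℕ) (x : Tup r s) : Prop :=
  memC r s x ∧ ∀ j, lastEntry (x.1 j) = 0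

/-- `EqLR_r^s = {x ∈ EqC_r^s : λ^j_r ≥ 0 and λ^j_i ≤ ν_i for all i, j}`. -/
def memEqLR (r s : ℕ) (x : Tup r s) : Prop :=
  memEqC r s x ∧ (∀ j, 0 ≤ lastEntry (x.1 j)) ∧ ∀ j i, x.1 j i ≤ x.2 i

/-- `ω_k ∈ ℝ^r`: first `k` entries equal `1`, the rest `0`. -/
def omegaVec (r k : ℕ) : Fin r → ℝ := fun i => if (i : ℕ) < k then 1 else 0

/-- `x_j ∈ (ℝ^r)^s`: `ω_r` in the `j`-th and last positions, `0` elsewhere. -/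
def xvec (r s : ℕ) (j : Fin (s - 1)) : Tup r s :=
  (fun k => if k = j then omegaVec r r else 0, omegaVec r r)

/-- A nonzero `x` in a cone `K` spans an extremal ray of `K` if whenever
`x = y + z` with `y, z ∈ K`, both `y` and `z` are nonnegative multiples of `x`. -/
def IsExtremalRay {M : Type*} [AddCommMonoid M] [Module ℝ M] (K : Set M) (x : M) : Prop :=
  x ≠ 0 ∧ x ∈ K ∧ ∀ y z, y ∈ K → z ∈ K → x = y + z →
    (∃ c : ℝ, 0 ≤ c ∧ y = c • x) ∧ (∃ c : ℝ, 0 ≤ c ∧ z = c • x)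

lemma charpoly_add_smul_one_aux {r : ℕ} (A : Matrix (Fin r) (Fin r) ℂ) (c : ℂ) :
    (A + c • 1).charpoly = Polynomial.aeval (X - C c) A.charpoly := by
  rw [Matrix.charpoly, Matrix.charpoly,
    AlgHom.map_det (Polynomial.aeval (X - C c) : ℂ[X] →ₐ[ℂ] ℂ[X])]
  congr 1
  ext i j
  by_cases hij : i = j
  · subst hij
    simp [AlgHom.mapMatrix_apply, Matrix.map_apply, Matrix.charmatrix_apply_eq,
      Matrix.add_apply, Matrix.smul_apply, Matrix.one_apply, map_sub, aeval_X, aeval_C,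
      Polynomial.algebraMap_eq]
    ring
  · simp [AlgHom.mapMatrix_apply, Matrix.map_apply, Matrix.charmatrix_apply_ne _ _ _ hij,
      Matrix.add_apply, Matrix.smul_apply, Matrix.one_apply, hij, aeval_C,
      Polynomial.algebraMap_eq]

lemma hasEig_shift {r : ℕ} {A : Matrix (Fin r) (Fin r) ℂ} {μ : Fin r → ℝ}
    (h : HasEigenvalues A μ) (c : ℝ) :
    HasEigenvalues (A + (c : ℂ) • 1) (fun i => μ i + c) := by
  obtain ⟨hherm, hchar⟩ := h
  constructor
  · apply hherm.add
    simp [Matrix.IsHermitian, Matrix.conjTranspose_smul, Complex.star_def,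
      Complex.conj_ofReal]
  · rw [charpoly_add_smul_one_aux, hchar, map_prod]
    apply Finset.prod_congr rfl
    intro i _
    simp [map_sub, aeval_X, aeval_C, algebraMap_eq]
    push_cast
    ring

/-- every element of `EqC_r^s` is `z + ∑_j a_j • x_j` with
`z ∈ EqLR_r^s` and real `a_j`. -/
theorem stmt2 (r s : ℕ) (hr : 1 ≤ r) (hs : 3 ≤ s) (x : Tup r s) (hx : memEqC r s x) :
    ∃ (z : Tup r s) (a : Fin (s - 1) → ℝ),
      memEqLR r s z ∧ x = z + ∑ j, a j • xvec r s j := by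
  obtain ⟨hAmono, hBmono, A, B, hAe, hBe, hpsd⟩ := hx
  obtain ⟨M0, hM0⟩ := Finite.exists_le (fun p : Fin (s - 1) × Fin r => x.1 p.1 p.2 - x.2 p.2)
  obtain ⟨M1, hM1⟩ := Finite.exists_le (fun j : Fin (s - 1) => -(lastEntry (x.1 j)))
  set M : ℝ := max 0 (max M0 M1) with hMdef
  have hMnn : (0 : ℝ) ≤ M := le_max_left _ _
  have hM0' : ∀ j i, x.1 j i - x.2 i ≤ M := fun j i =>
    le_trans (hM0 (j, i)) (le_trans (le_max_left _ _) (le_max_right _ _))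
  have hM1' : ∀ j, -(lastEntry (x.1 j)) ≤ M := fun j =>
    le_trans (hM1 j) (le_trans (le_max_right _ _) (le_max_right _ _))
  have hs2 : (2 : ℝ) ≤ ((s - 1 : ℕ) : ℝ) := by
    have : 2 ≤ s - 1 := by omega
    exact_mod_cast this
  refine ⟨(fun k i => x.1 k i + M, fun i => x.2 i + ((s - 1 : ℕ) : ℝ) * M),
    fun _ => -M, ⟨⟨?_, ?_, ?_⟩, ?_, ?_⟩, ?_⟩
  · intro j a b hab
    simp only
    exact add_le_add_left (hAmono j hab) M
  · intro a b hab
    simp only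
    exact add_le_add_left (hBmono hab) _
  · refine ⟨fun j => A j + (M : ℂ) • 1, B + ((((s - 1 : ℕ) : ℝ) * M : ℝ) : ℂ) • 1,
      fun j => hasEig_shift (hAe j) M, hasEig_shift hBe _, ?_⟩
    have hsum : (∑ j : Fin (s - 1), (A j + (M : ℂ) • 1))
        = (∑ j, A j) + (s - 1 : ℕ) • ((M : ℂ) • (1 : Matrix (Fin r) (Fin r) ℂ)) := by
      rw [Finset.sum_add_distrib, Finset.sum_const, Finset.card_univ, Fintype.card_fin]
    rw [hsum]
    have hcast : (s - 1 : ℕ) • ((M : ℂ) • (1 : Matrix (Fin r) (Fin r) ℂ))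
        = ((((s - 1 : ℕ) : ℝ) * M : ℝ) : ℂ) • (1 : Matrix (Fin r) (Fin r) ℂ) := by
      rw [← Nat.cast_smul_eq_nsmul ℂ, smul_smul]
      push_cast
      ring_nf
    rw [hcast]
    have : (∑ j, A j) + ((((s - 1 : ℕ) : ℝ) * M : ℝ) : ℂ) • (1 : Matrix (Fin r) (Fin r) ℂ)
        - (B + ((((s - 1 : ℕ) : ℝ) * M : ℝ) : ℂ) • 1) = (∑ j, A j) - B := by
      abel
    rw [this]
    exact hpsd
  · intro j
    have hr' : 0 < r := hr
    simp only [lastEntry, dif_pos hr'] at hM1' ⊢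
    have := hM1' j
    linarith
  · intro j i
    have h1 := hM0' j i
    have h2 : 2 * M ≤ ((s - 1 : ℕ) : ℝ) * M := mul_le_mul_of_nonneg_right hs2 hMnn
    show x.1 j i + M ≤ x.2 i + ((s - 1 : ℕ) : ℝ) * M
    linarith
  · have hsumfst : ∀ k i, (∑ j, (fun _ => -M : Fin (s - 1) → ℝ) j • xvec r s j).1 k i
        = -M := by
      intro k i
      have : (∑ j, (fun _ => -M : Fin (s - 1) → ℝ) j • xvec r s j).1
          = ∑ j, ((-M) • xvec r s j).1 := by
        simp [Prod.fst_sum]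
      rw [this]
      simp only [Finset.sum_apply, Prod.smul_fst, xvec, Pi.smul_apply]
      rw [Finset.sum_eq_single k]
      · simp [omegaVec, i.isLt]
      · intro b _ hb
        simp [Ne.symm hb]
      · simp
    have hsumsnd : ∀ i, (∑ j, (fun _ => -M : Fin (s - 1) → ℝ) j • xvec r s j).2 i
        = ((s - 1 : ℕ) : ℝ) * (-M) := by
      intro i
      have : (∑ j, (fun _ => -M : Fin (s - 1) → ℝ) j • xvec r s j).2
          = ∑ j : Fin (s - 1), ((-M) • xvec r s j).2 := by
        simp [Prod.snd_sum]
      rw [this]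
      simp only [Finset.sum_apply, Prod.smul_snd, xvec, Pi.smul_apply]
      simp [omegaVec, i.isLt, Finset.sum_const, Finset.card_univ, mul_comm]
    refine Prod.ext ?_ ?_
    · funext k i
      simp only [Prod.fst_add, Pi.add_apply]
      rw [hsumfst k i]
      ring
    · funext i
      simp only [Prod.snd_add, Pi.add_apply]
      rw [hsumsnd i]
      ring
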